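/- arXiv:1206.2512 — 2 statements merged into one kernel-verified Lean document; each statement's English description precedes it below -/
import Mathlib

section
/- Let H be a 2-regular k-uniform hypergraph, i.e., every edge of H has exactly k vertices and every vertex of H lies in exactly two edges. Then the Graver basis of I_H generates the ideal I_H, and every element of the Graver basis is an indispensable binomial of I_H (so every binomial generating set of I_H contains each Graver basis element up to sign); consequently the Graver basis is the unique minimal binomial generating set of I_H. -/
set_option linter.unusedSectionVars false


open MvPolynomial

namespace ToricHG

variable (K : Type) [Field K] (V : Type) [Fintype V] [DecidableEq V]

/-- The edges of a hypergraph with edge set `E`, as a type. -/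
abbrev Edge (E : Finset (Finset V)) : Type := {e : Finset V // e ∈ E}

/-- The monomial map `t_e ↦ ∏_{v ∈ e} x_v`. -/
noncomputable def phiH (E : Finset (Finset V)) :
    MvPolynomial (Edge V E) K →ₐ[K] MvPolynomial V K :=
  aeval (fun e : Edge V E => ∏ v ∈ e.1, (X v : MvPolynomial V K))

/-- The toric ideal of a hypergraph. -/
noncomputable def toricIdeal (E : Finset (Finset V)) :
    Ideal (MvPolynomial (Edge V E) K) :=
  RingHom.ker (phiH K V E).toRingHom

/-- The number of edges of the multiset `M` containing `v`, counted with multiplicity. -/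
def degIn (E : Finset (Finset V)) (v : V) (M : Multiset (Edge V E)) : ℕ :=
  Multiset.card (M.filter (fun e => v ∈ e.1))

/-- The bicolored edge multiset `(B, R)` is balanced. -/
def Balanced (E : Finset (Finset V)) (B R : Multiset (Edge V E)) : Prop :=
  ∀ v : V, degIn V E v B = degIn V E v R

/-- The binomial arising from the bicolored edge multiset `(B, R)`. -/
noncomputable def binom (E : Finset (Finset V)) (B R : Multiset (Edge V E)) :
    MvPolynomial (Edge V E) K :=
  (B.map fun e => (X e : MvPolynomial (Edge V E) K)).prod -
    (R.map fun e => (X e : MvPolynomial (Edge V E) K)).prod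

/-- The balanced edge set `(B, R)` is primitive. -/
def Primitive (E : Finset (Finset V)) (B R : Multiset (Edge V E)) : Prop :=
  Balanced V E B R ∧
    ¬ ∃ B' R' : Multiset (Edge V E),
        ¬(B' = 0 ∧ R' = 0) ∧ Balanced V E B' R' ∧ B' < B ∧ R' < R

/-- The balanced edge set `(Fb, Fr)` is reducible with separator `S` and
decomposition `((G1b, G1r), S, (G2b, G2r))`. -/
def ReducibleWith (E : Finset (Finset V))
    (Fb Fr S G1b G1r G2b G2r : Multiset (Edge V E)) : Prop :=
  Balanced V E Fb Fr ∧ S ≠ 0 ∧ S.toFinset ⊆ (Fb + Fr).toFinset ∧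
    Balanced V E G1b G1r ∧ Balanced V E G2b G2r ∧
    ¬(G1b = Fb ∧ G1r = Fr) ∧ ¬(G2b = Fb ∧ G2r = Fr) ∧
    S = G1r ∩ G2b ∧ Fb = G1b + G2b ∧ Fr = G1r + G2r

/-- `S` is a splitting set of the balanced edge set `(Eb, Er)` with
decomposition `((G1b, G1r), S, (G2b, G2r))`, i.e. `(Eb, Er) + S` is reducible with
separator `S` and this decomposition. -/
def SplittingSetWith (E : Finset (Finset V))
    (Eb Er S G1b G1r G2b G2r : Multiset (Edge V E)) : Prop :=
  ReducibleWith V E (Eb + S) (Er + S) S G1b G1r G2b G2r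

/-- `S` is a proper splitting set of the balanced edge set `(Eb, Er)`. -/
def ProperSplittingSet (E : Finset (Finset V))
    (Eb Er S : Multiset (Edge V E)) : Prop :=
  ∃ G1b G1r G2b G2r : Multiset (Edge V E),
    SplittingSetWith V E Eb Er S G1b G1r G2b G2r ∧ S < G1r ∧ S < G2b

/-- A binomial: the difference of two distinct monic monomials. -/
def IsBinomial (E : Finset (Finset V)) (f : MvPolynomial (Edge V E) K) : Prop :=
  ∃ a b : (Edge V E) →₀ ℕ, a ≠ b ∧ f = monomial a 1 - monomial b 1

/-- `f` is an indispensable binomial of the toric ideal of the hypergraph. -/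
def Indispensable (E : Finset (Finset V)) (f : MvPolynomial (Edge V E) K) : Prop :=
  ∀ G : Set (MvPolynomial (Edge V E) K),
    (∀ g ∈ G, IsBinomial K V E g) → Ideal.span G = toricIdeal K V E →
      f ∈ G ∨ -f ∈ G

/-- The Graver basis of the toric ideal of the hypergraph: the binomials arising from
primitive balanced edge sets `(B, R)` with `B ≠ R`. -/
def GraverSet (E : Finset (Finset V)) : Set (MvPolynomial (Edge V E) K) :=
  {f | ∃ B R : Multiset (Edge V E), Primitive V E B R ∧ B ≠ R ∧ f = binom K V E B R}

/-- The ideal `I` is generated in degree at most `d`. -/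
def GenInDegLE {σ : Type} (I : Ideal (MvPolynomial σ K)) (d : ℕ) : Prop :=
  I = Ideal.span {f | f ∈ I ∧ f.totalDegree ≤ d}

end ToricHG

namespace ToricHG

set_option linter.unusedSectionVars false

variable (K : Type) [Field K] (V : Type) [Fintype V] [DecidableEq V]
variable (E : Finset (Finset V))

-- ### new defs
variable (E : Finset (Finset V))

noncomputable def mon (M : Multiset (Edge V E)) : MvPolynomial (Edge V E) K :=
  monomial M.toFinsupp 1

lemma mon_mul (A B : Multiset (Edge V E)) : mon K V E A * mon K V E B = mon K V E (A + B) := by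
  simp [mon, monomial_mul]

lemma mon_zero : mon K V E 0 = 1 := by
  simp [mon]

lemma mon_single (a : Edge V E) : mon K V E {a} = X a := by
  simp [mon, Multiset.toFinsupp_singleton, X]

lemma prodX_eq (M : Multiset (Edge V E)) :
    (M.map fun e => (X e : MvPolynomial (Edge V E) K)).prod = mon K V E M := by
  induction M using Multiset.induction_on with
  | empty => simp [mon_zero]
  | cons a M ih =>
      rw [Multiset.map_cons, Multiset.prod_cons, ih, ← mon_single K V E a, mon_mul,
        Multiset.singleton_add]

lemma binom_eq (B R : Multiset (Edge V E)) :
    binom K V E B R = mon K V E B - mon K V E R := by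
  rw [binom, prodX_eq, prodX_eq]

noncomputable def edeg (e : Edge V E) : V →₀ ℕ := ∑ v ∈ e.1, Finsupp.single v 1

lemma edeg_apply (e : Edge V E) (v : V) : edeg V E e v = if v ∈ e.1 then 1 else 0 := by
  classical
  simp [edeg, Finsupp.finset_sum_apply, Finsupp.single_apply]

noncomputable def degF (M : Multiset (Edge V E)) : V →₀ ℕ := (M.map (edeg V E)).sum

lemma degF_zero : degF V E 0 = 0 := by simp [degF]

lemma degF_cons (a : Edge V E) (M : Multiset (Edge V E)) :
    degF V E (a ::ₘ M) = edeg V E a + degF V E M := by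
  simp [degF]

lemma degIn_cons (v : V) (a : Edge V E) (M : Multiset (Edge V E)) :
    degIn V E v (a ::ₘ M) = (if v ∈ a.1 then 1 else 0) + degIn V E v M := by
  rw [degIn, Multiset.filter_cons]
  split <;> simp [degIn] <;> omega

lemma degF_eq_degIn (M : Multiset (Edge V E)) (v : V) : degF V E M v = degIn V E v M := by
  induction M using Multiset.induction_on with
  | empty => simp [degF_zero, degIn]
  | cons a M ih =>
      rw [degF_cons, degIn_cons, Finsupp.add_apply, ih, edeg_apply]

lemma balanced_iff (B R : Multiset (Edge V E)) :
    Balanced V E B R ↔ degF V E B = degF V E R := by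
  constructor
  · intro h; ext v; rw [degF_eq_degIn, degF_eq_degIn]; exact h v
  · intro h v; rw [← degF_eq_degIn, ← degF_eq_degIn, h]

lemma prod_X_finset (s : Finset V) :
    ∏ v ∈ s, (X v : MvPolynomial V K) = monomial (∑ v ∈ s, Finsupp.single v 1) 1 := by
  induction s using Finset.induction_on with
  | empty => simp
  | insert _ _ hx ih =>
      rw [Finset.prod_insert hx, ih, Finset.sum_insert hx,
        show (X _ : MvPolynomial V K) = monomial (Finsupp.single _ 1) 1 from rfl, monomial_mul,
        one_mul]

lemma phi_X (e : Edge V E) : phiH K V E (X e) = monomial (edeg V E e) 1 := by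
  rw [phiH, aeval_X, prod_X_finset, edeg]

lemma phi_mon (M : Multiset (Edge V E)) :
    phiH K V E (mon K V E M) = monomial (degF V E M) 1 := by
  induction M using Multiset.induction_on with
  | empty => simp [mon_zero, degF_zero]
  | cons a M ih =>
      have : (a ::ₘ M) = {a} + M := by rw [← Multiset.singleton_add]
      rw [this, ← mon_mul, map_mul, ih, mon_single, phi_X, monomial_mul, degF]
      simp [degF, edeg]

lemma mem_toric_iff (f : MvPolynomial (Edge V E) K) :
    f ∈ toricIdeal K V E ↔ phiH K V E f = 0 := Iff.rfl

lemma binom_mem (B R : Multiset (Edge V E)) (h : Balanced V E B R) :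
    binom K V E B R ∈ toricIdeal K V E := by
  rw [mem_toric_iff, binom_eq, map_sub, phi_mon, phi_mon, (balanced_iff V E B R).1 h, sub_self]

lemma balanced_of_mem (B R : Multiset (Edge V E))
    (h : mon K V E B - mon K V E R ∈ toricIdeal K V E) : Balanced V E B R := by
  rw [mem_toric_iff, map_sub, phi_mon, phi_mon, sub_eq_zero, monomial_eq_monomial_iff] at h
  rcases h with ⟨h, -⟩ | ⟨h, -⟩
  · exact (balanced_iff V E B R).2 h
  · exact absurd h one_ne_zero

-- ## multiset balance arithmetic

lemma degIn_add (v : V) (A B : Multiset (Edge V E)) :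
    degIn V E v (A + B) = degIn V E v A + degIn V E v B := by
  simp [degIn, Multiset.filter_add]

lemma degIn_sub (v : V) (A B : Multiset (Edge V E)) (h : B ≤ A) :
    degIn V E v (A - B) = degIn V E v A - degIn V E v B := by
  have h2 : A - B + B = A := tsub_add_cancel_of_le h
  have h3 := degIn_add V E v (A - B) B
  rw [h2] at h3
  have h4 : degIn V E v B ≤ degIn V E v A := by omega
  omega

lemma balanced_sub {B R B' R' : Multiset (Edge V E)} (h : Balanced V E B R)
    (h' : Balanced V E B' R') (hB : B' ≤ B) (hR : R' ≤ R) :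
    Balanced V E (B - B') (R - R') := by
  intro v
  rw [degIn_sub V E v B B' hB, degIn_sub V E v R R' hR, h v, h' v]

lemma balanced_symm {B R : Multiset (Edge V E)} (h : Balanced V E B R) :
    Balanced V E R B := fun v => (h v).symm

lemma degIn_pos {M : Multiset (Edge V E)} {e : Edge V E} (he : e ∈ M) {v : V}
    (hv : v ∈ e.1) : 0 < degIn V E v M := by
  rw [degIn, Multiset.card_pos_iff_exists_mem]
  exact ⟨e, Multiset.mem_filter.2 ⟨he, hv⟩⟩

lemma balanced_zero_left (hE : ∀ e ∈ E, e.Nonempty) {R : Multiset (Edge V E)}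
    (h : Balanced V E 0 R) : R = 0 := by
  by_contra hR
  obtain ⟨e, he⟩ := Multiset.exists_mem_of_ne_zero hR
  obtain ⟨v, hv⟩ := hE e.1 e.2
  have h1 := degIn_pos V E he hv
  have h2 := h v
  simp only [degIn, Multiset.filter_zero, Multiset.card_zero] at h1 h2
  omega

lemma balanced_nonzero (hE : ∀ e ∈ E, e.Nonempty) {B R : Multiset (Edge V E)}
    (h : Balanced V E B R) (hne : ¬(B = 0 ∧ R = 0)) : B ≠ 0 ∧ R ≠ 0 := by
  constructor
  · rintro rfl
    exact hne ⟨rfl, balanced_zero_left V E hE h⟩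
  · rintro rfl
    exact hne ⟨balanced_zero_left V E hE (balanced_symm V E h), rfl⟩

-- ## generation

lemma binom_mem_span (hE : ∀ e ∈ E, e.Nonempty) :
    ∀ n (B R : Multiset (Edge V E)), Multiset.card B + Multiset.card R ≤ n →
      Balanced V E B R → binom K V E B R ∈ Ideal.span (GraverSet K V E) := by
  intro n
  induction n with
  | zero =>
      intro B R hc hbal
      have hB : B = 0 := by
        rw [← Multiset.card_eq_zero]; omega
      have hR : R = 0 := by
        rw [← Multiset.card_eq_zero]; omega
      subst hB; subst hR
      simp [binom_eq]
  | succ n ih =>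
      intro B R hc hbal
      by_cases hBR : B = R
      · subst hBR; simp [binom_eq]
      by_cases hprim : Primitive V E B R
      · exact Ideal.subset_span ⟨B, R, hprim, hBR, rfl⟩
      · have hex : ∃ B' R' : Multiset (Edge V E),
            ¬(B' = 0 ∧ R' = 0) ∧ Balanced V E B' R' ∧ B' < B ∧ R' < R := by
          by_contra hno
          exact hprim ⟨hbal, hno⟩
        obtain ⟨B', R', hne, hbal', hBB, hRR⟩ := hex
        obtain ⟨hB'0, hR'0⟩ := balanced_nonzero V E hE hbal' hne
        have key : binom K V E B R = mon K V E (B - B') * binom K V E B' R'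
            + mon K V E R' * binom K V E (B - B') (R - R') := by
          rw [binom_eq, binom_eq, binom_eq, mul_sub, mul_sub, mon_mul, mon_mul, mon_mul,
            mon_mul, tsub_add_cancel_of_le hBB.le, add_tsub_cancel_of_le hRR.le,
            add_comm (B - B') R']
          abel
        have hcard1 : Multiset.card B' + Multiset.card R' ≤ n := by
          have := Multiset.card_lt_card hBB
          have := Multiset.card_lt_card hRR
          omega
        have hcard2 : Multiset.card (B - B') + Multiset.card (R - R') ≤ n := by
          rw [Multiset.card_sub hBB.le, Multiset.card_sub hRR.le]
          have h1 := Multiset.card_lt_card hBB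
          have h2 := Multiset.card_lt_card hRR
          have h3 : 0 < Multiset.card B' := Multiset.card_pos.2 hB'0
          have h4 : 0 < Multiset.card R' := Multiset.card_pos.2 hR'0
          omega
        rw [key]
        exact add_mem (Ideal.mul_mem_left _ _ (ih B' R' hcard1 hbal'))
          (Ideal.mul_mem_left _ _ (ih _ _ hcard2 (balanced_sub V E hbal hbal' hBB.le hRR.le)))

noncomputable def DD (a : Edge V E →₀ ℕ) : V →₀ ℕ := degF V E a.toMultiset

lemma mon_toMultiset (a : Edge V E →₀ ℕ) :
    mon K V E a.toMultiset = monomial a 1 := by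
  rw [mon, Finsupp.toMultiset_toFinsupp]

lemma phi_monomial (a : Edge V E →₀ ℕ) (c : K) :
    phiH K V E (monomial a c) = monomial (DD V E a) c := by
  have h1 : (monomial a c : MvPolynomial (Edge V E) K) = C c * monomial a 1 := by
    rw [C_mul_monomial, mul_one]
  rw [h1, map_mul, ← mon_toMultiset, phi_mon, DD]
  have h2 : phiH K V E (C c) = C c := by simp [phiH]
  rw [h2, C_mul_monomial, mul_one]

lemma coeff_phi (f : MvPolynomial (Edge V E) K) (t : V →₀ ℕ) :
    coeff t (phiH K V E f) =
      ∑ a ∈ f.support, (if DD V E a = t then coeff a f else 0) := by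
  conv_lhs => rw [← support_sum_monomial_coeff f]
  rw [map_sum, coeff_sum]
  refine Finset.sum_congr rfl fun a _ => ?_
  rw [phi_monomial, coeff_monomial]

lemma toric_le_span (hE : ∀ e ∈ E, e.Nonempty) :
    toricIdeal K V E ≤ Ideal.span (GraverSet K V E) := by
  suffices h : ∀ n (f : MvPolynomial (Edge V E) K), f.support.card ≤ n →
      f ∈ toricIdeal K V E → f ∈ Ideal.span (GraverSet K V E) by
    intro f hf; exact h f.support.card f le_rfl hf
  intro n
  induction n with
  | zero =>
      intro f hc _
      have : f = 0 := by
        rw [← support_eq_empty, ← Finset.card_eq_zero]; omega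
      simp [this]
  | succ n ih =>
      intro f hc hf
      by_cases hf0 : f = 0
      · simp [hf0]
      obtain ⟨a₀, ha₀⟩ := support_nonempty.2 hf0
      have hphi : phiH K V E f = 0 := hf
      have hsum : ∑ a ∈ f.support, (if DD V E a = DD V E a₀ then coeff a f else 0) = 0 := by
        rw [← coeff_phi, hphi, coeff_zero]
      have hb : ∃ b ∈ f.support, b ≠ a₀ ∧ DD V E b = DD V E a₀ := by
        by_contra hno
        push_neg at hno
        have : ∑ a ∈ f.support, (if DD V E a = DD V E a₀ then coeff a f else 0)
            = coeff a₀ f := by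
          rw [Finset.sum_eq_single_of_mem a₀ ha₀]
          · simp
          · intro b hbs hbne
            rcases eq_or_ne (DD V E b) (DD V E a₀) with h | h
            · exact absurd h (hno b hbs hbne)
            · simp [h]
        rw [this] at hsum
        exact (mem_support_iff.1 ha₀) hsum
      obtain ⟨b, hbs, hbne, hDb⟩ := hb
      set c := coeff a₀ f with hc'
      set g := binom K V E a₀.toMultiset b.toMultiset with hg
      have hgeq : g = monomial a₀ 1 - monomial b 1 := by
        rw [hg, binom_eq, mon_toMultiset, mon_toMultiset]
      have hgbal : Balanced V E a₀.toMultiset b.toMultiset :=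
        (balanced_iff V E _ _).2 (hDb.symm)
      have hgspan : g ∈ Ideal.span (GraverSet K V E) :=
        binom_mem_span K V E hE _ _ _ le_rfl hgbal
      have hgtoric : g ∈ toricIdeal K V E := binom_mem K V E _ _ hgbal
      set f' := f - C c * g with hf'
      have hf'toric : f' ∈ toricIdeal K V E :=
        sub_mem hf (Ideal.mul_mem_left _ _ hgtoric)
      have hsupp : f'.support ⊆ f.support.erase a₀ := by
        intro x hx
        rw [Finset.mem_erase]
        rw [mem_support_iff] at hx
        refine ⟨?_, ?_⟩
        · rintro rfl
          apply hx
          rw [hf', coeff_sub, coeff_C_mul, hgeq, coeff_sub, coeff_monomial, coeff_monomial,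
            if_pos rfl, if_neg (fun h => hbne h)]
          ring
        · by_contra hxs
          apply hx
          rw [mem_support_iff, not_not] at hxs
          have hxb : x ≠ b := by rintro rfl; exact (mem_support_iff.1 hbs) hxs
          have hxa : x ≠ a₀ := by
            rintro rfl; exact (mem_support_iff.1 ha₀) hxs
          rw [hf', coeff_sub, coeff_C_mul, hgeq, coeff_sub, coeff_monomial, coeff_monomial,
            if_neg (fun h => hxa h.symm), if_neg (fun h => hxb h.symm), hxs]
          ring
      have hcard : f'.support.card ≤ n := by
        have h1 : (f.support.erase a₀).card < f.support.card :=
          Finset.card_erase_lt_of_mem ha₀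
        have h2 := Finset.card_le_card hsupp
        omega
      have : f = f' + C c * g := by rw [hf']; ring
      rw [this]
      exact add_mem (ih f' hcard hf'toric) (Ideal.mul_mem_left _ _ hgspan)

lemma span_graver_eq (hE : ∀ e ∈ E, e.Nonempty) :
    Ideal.span (GraverSet K V E) = toricIdeal K V E := by
  apply le_antisymm
  · rw [Ideal.span_le]
    rintro f ⟨B, R, hprim, -, rfl⟩
    exact binom_mem K V E B R hprim.1
  · exact toric_le_span K V E hE

-- ## connectedness machinery

def Step (G : Set (MvPolynomial (Edge V E) K)) (x y : Edge V E →₀ ℕ) : Prop :=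
  ∃ a u v : Edge V E →₀ ℕ,
    x = a + u ∧ y = a + v ∧
      ((monomial u 1 - monomial v 1 : MvPolynomial (Edge V E) K) ∈ G ∨
        (monomial v 1 - monomial u 1 : MvPolynomial (Edge V E) K) ∈ G)

lemma step_symm {G : Set (MvPolynomial (Edge V E) K)} {x y : Edge V E →₀ ℕ}
    (h : Step K V E G x y) : Step K V E G y x := by
  obtain ⟨a, u, v, hx, hy, hor⟩ := h
  exact ⟨a, v, u, hy, hx, hor.symm⟩

def Conn (G : Set (MvPolynomial (Edge V E) K)) (β : Edge V E →₀ ℕ) : Set (Edge V E →₀ ℕ) :=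
  {x | Relation.ReflTransGen (Step K V E G) β x}

def SS (G : Set (MvPolynomial (Edge V E) K)) : Set (MvPolynomial (Edge V E) K) :=
  {p | ∃ (a : Edge V E →₀ ℕ) (g : MvPolynomial (Edge V E) K), g ∈ G ∧ p = monomial a 1 * g}

lemma mul_mem_spanK (G : Set (MvPolynomial (Edge V E) K)) (p x : MvPolynomial (Edge V E) K)
    (hx : x ∈ Submodule.span K (SS K V E G)) :
    p * x ∈ Submodule.span K (SS K V E G) := by
  induction hx using Submodule.span_induction with
  | mem x hxS =>
      obtain ⟨a, g, hg, rfl⟩ := hxS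
      have hkey : p * (monomial a 1 * g)
          = ∑ b ∈ p.support, coeff b p • (monomial (b + a) 1 * g) := by
        conv_lhs => rw [← support_sum_monomial_coeff p]
        rw [Finset.sum_mul]
        refine Finset.sum_congr rfl fun b _ => ?_
        rw [← smul_mul_assoc, smul_monomial, smul_eq_mul, mul_one, ← mul_assoc,
          monomial_mul, mul_one]
      rw [hkey]
      exact Submodule.sum_mem _ fun b _ =>
        Submodule.smul_mem _ _ (Submodule.subset_span ⟨b + a, g, hg, rfl⟩)
  | zero => simp
  | add x y _ _ hx hy => rw [mul_add]; exact add_mem hx hy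
  | smul c x _ hx => rw [mul_smul_comm]; exact Submodule.smul_mem _ _ hx

lemma ideal_le_spanK (G : Set (MvPolynomial (Edge V E) K)) (f : MvPolynomial (Edge V E) K)
    (hf : f ∈ Ideal.span G) : f ∈ Submodule.span K (SS K V E G) := by
  induction hf using Submodule.span_induction with
  | mem g hg =>
      apply Submodule.subset_span
      exact ⟨0, g, hg, by rw [monomial_zero', C_1, one_mul]⟩
  | zero => simp
  | add x y _ _ hx hy => exact add_mem hx hy
  | smul c x _ hx =>
      rw [smul_eq_mul]
      exact mul_mem_spanK K V E G c x hx

noncomputable def piC (CC : Set (Edge V E →₀ ℕ)) (p : MvPolynomial (Edge V E) K) : K :=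
  ∑ a ∈ p.support, coeff a p * CC.indicator (fun _ => (1 : K)) a

lemma piC_superset (CC : Set (Edge V E →₀ ℕ)) (p : MvPolynomial (Edge V E) K)
    (T : Finset (Edge V E →₀ ℕ)) (hT : p.support ⊆ T) :
    piC K V E CC p = ∑ a ∈ T, coeff a p * CC.indicator (fun _ => (1 : K)) a := by
  rw [piC]
  refine Finset.sum_subset hT fun a _ ha => ?_
  rw [notMem_support_iff.1 ha, zero_mul]

lemma piC_add (CC : Set (Edge V E →₀ ℕ)) (p q : MvPolynomial (Edge V E) K) :
    piC K V E CC (p + q) = piC K V E CC p + piC K V E CC q := by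
  classical
  set T := p.support ∪ q.support ∪ (p + q).support with hT
  rw [piC_superset K V E CC p T (by intro a ha; simp [hT, ha]),
    piC_superset K V E CC q T (by intro a ha; simp [hT, ha]),
    piC_superset K V E CC (p + q) T (by intro a ha; simp [hT, ha]),
    ← Finset.sum_add_distrib]
  refine Finset.sum_congr rfl fun a _ => ?_
  rw [coeff_add, add_mul]

lemma piC_smul (CC : Set (Edge V E →₀ ℕ)) (c : K) (p : MvPolynomial (Edge V E) K) :
    piC K V E CC (c • p) = c * piC K V E CC p := by
  rw [piC_superset K V E CC (c • p) p.support (support_smul), piC, Finset.mul_sum]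
  refine Finset.sum_congr rfl fun a _ => ?_
  rw [coeff_smul, smul_eq_mul, mul_assoc]

lemma piC_monomial (CC : Set (Edge V E →₀ ℕ)) (a : Edge V E →₀ ℕ) :
    piC K V E CC (monomial a (1 : K)) = CC.indicator (fun _ => (1 : K)) a := by
  classical
  rw [piC, support_monomial, if_neg (one_ne_zero (α := K)), Finset.sum_singleton,
    coeff_monomial, if_pos rfl, one_mul]

lemma piC_vanish (G : Set (MvPolynomial (Edge V E) K))
    (hGbin : ∀ g ∈ G, ∃ u v : Edge V E →₀ ℕ, u ≠ v ∧
      g = monomial u 1 - monomial v 1)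
    (β : Edge V E →₀ ℕ) (f : MvPolynomial (Edge V E) K)
    (hf : f ∈ Submodule.span K (SS K V E G)) :
    piC K V E (Conn K V E G β) f = 0 := by
  set CC := Conn K V E G β with hCC
  induction hf using Submodule.span_induction with
  | mem s hs =>
      obtain ⟨a, g, hg, rfl⟩ := hs
      obtain ⟨u, v, huv, rfl⟩ := hGbin _ hg
      have hmul : (monomial a (1:K)) * (monomial u 1 - monomial v 1)
          = monomial (a + u) (1:K) - monomial (a + v) 1 := by
        rw [mul_sub, monomial_mul, monomial_mul, mul_one]
      have hstep : Step K V E G (a + u) (a + v) :=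
        ⟨a, u, v, rfl, rfl, Or.inl hg⟩
      have hiff : (a + u) ∈ CC ↔ (a + v) ∈ CC := by
        constructor
        · intro h; exact Relation.ReflTransGen.tail h hstep
        · intro h; exact Relation.ReflTransGen.tail h (step_symm K V E hstep)
      have hsub : ∀ p q : MvPolynomial (Edge V E) K,
          piC K V E CC (p - q) = piC K V E CC p - piC K V E CC q := by
        intro p q
        have h1 : p - q = p + (-1 : K) • q := by
          rw [neg_one_smul]; ring
        rw [h1, piC_add, piC_smul]; ring
      rw [hmul, hsub, piC_monomial, piC_monomial]
      by_cases h : (a + u) ∈ CC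
      · rw [Set.indicator_of_mem h, Set.indicator_of_mem (hiff.1 h), sub_self]
      · rw [Set.indicator_of_notMem h, Set.indicator_of_notMem (fun hh => h (hiff.2 hh)),
          sub_self]
  | zero => simp [piC]
  | add x y _ _ hx hy => rw [piC_add, hx, hy, add_zero]
  | smul c x _ hx => rw [piC_smul, hx, mul_zero]

lemma conn_of_mem_span (G : Set (MvPolynomial (Edge V E) K))
    (hGbin : ∀ g ∈ G, ∃ u v : Edge V E →₀ ℕ, u ≠ v ∧ g = monomial u 1 - monomial v 1)
    (β ρ : Edge V E →₀ ℕ) (hne : β ≠ ρ)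
    (hf : (monomial β 1 - monomial ρ 1 : MvPolynomial (Edge V E) K) ∈ Ideal.span G) :
    ρ ∈ Conn K V E G β := by
  have h0 := piC_vanish K V E G hGbin β _ (ideal_le_spanK K V E G _ hf)
  have hsub : ∀ p q : MvPolynomial (Edge V E) K,
      piC K V E (Conn K V E G β) (p - q)
        = piC K V E (Conn K V E G β) p - piC K V E (Conn K V E G β) q := by
    intro p q
    have h1 : p - q = p + (-1 : K) • q := by rw [neg_one_smul]; ring
    rw [h1, piC_add, piC_smul]; ring
  rw [hsub, piC_monomial, piC_monomial] at h0
  have hβ : β ∈ Conn K V E G β := Relation.ReflTransGen.refl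
  rw [Set.indicator_of_mem hβ] at h0
  by_contra hρ
  rw [Set.indicator_of_notMem hρ, sub_zero] at h0
  exact one_ne_zero h0

-- ## 2-regular combinatorics

lemma two_edges (hreg : ∀ v : V, (E.filter (fun e => v ∈ e)).card = 2) (x : V) :
    ∃ e f : Edge V E, e ≠ f ∧ x ∈ e.1 ∧ x ∈ f.1 ∧
      ∀ g : Edge V E, x ∈ g.1 → g = e ∨ g = f := by
  obtain ⟨a, b, hab, hset⟩ := Finset.card_eq_two.1 (hreg x)
  have ha : a ∈ E.filter (fun e => x ∈ e) := by rw [hset]; simp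
  have hb : b ∈ E.filter (fun e => x ∈ e) := by rw [hset]; simp
  rw [Finset.mem_filter] at ha hb
  refine ⟨⟨a, ha.1⟩, ⟨b, hb.1⟩, ?_, ha.2, hb.2, ?_⟩
  · intro h; exact hab (congrArg Subtype.val h)
  · intro g hg
    have : g.1 ∈ E.filter (fun e => x ∈ e) := Finset.mem_filter.2 ⟨g.2, hg⟩
    rw [hset, Finset.mem_insert, Finset.mem_singleton] at this
    rcases this with h | h
    · exact Or.inl (Subtype.ext h)
    · exact Or.inr (Subtype.ext h)

lemma degIn_eq_counts {e f : Edge V E} (hef : e ≠ f) {x : V}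
    (huniq : ∀ g : Edge V E, x ∈ g.1 → g = e ∨ g = f)
    (hxe : x ∈ e.1) (hxf : x ∈ f.1) (M : Multiset (Edge V E)) :
    degIn V E x M = M.count e + M.count f := by
  induction M using Multiset.induction_on with
  | empty => simp [degIn]
  | cons a M ih =>
      rw [degIn_cons, ih, Multiset.count_cons, Multiset.count_cons]
      by_cases hxa : x ∈ a.1
      · rcases huniq a hxa with h | h
        · rw [if_pos hxa, if_pos h.symm,
            if_neg (fun hf : f = a => hef ((hf.trans h).symm))]
          omega
        · rw [if_pos hxa, if_neg (fun he : e = a => hef (he.trans h)), if_pos h.symm]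
          omega
      · rw [if_neg hxa, if_neg (fun he : e = a => hxa (by rw [← he]; exact hxe)),
          if_neg (fun hf : f = a => hxa (by rw [← hf]; exact hxf))]
        omega

def Adj (e f : Edge V E) : Prop := e ≠ f ∧ ∃ x : V, x ∈ e.1 ∧ x ∈ f.1

lemma adj_symm {e f : Edge V E} (h : Adj V E e f) : Adj V E f e := by
  obtain ⟨hne, x, hx1, hx2⟩ := h
  exact ⟨hne.symm, x, hx2, hx1⟩

lemma balanced_count_adj (hreg : ∀ v : V, (E.filter (fun e => v ∈ e)).card = 2)
    {C D : Multiset (Edge V E)} (hbal : Balanced V E C D) {e f : Edge V E}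
    (hadj : Adj V E e f) :
    C.count e + C.count f = D.count e + D.count f := by
  obtain ⟨hne, x, hx1, hx2⟩ := hadj
  obtain ⟨e', f', hef', hxe', hxf', huniq⟩ := two_edges V E hreg x
  have hx := hbal x
  rcases huniq e hx1 with rfl | rfl
  · rcases huniq f hx2 with rfl | rfl
    · exact absurd rfl hne
    · rw [degIn_eq_counts V E hef' huniq hxe' hxf' C,
        degIn_eq_counts V E hef' huniq hxe' hxf' D] at hx
      exact hx
  · rcases huniq f hx2 with rfl | rfl
    · rw [degIn_eq_counts V E hef' huniq hxe' hxf' C,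
        degIn_eq_counts V E hef' huniq hxe' hxf' D] at hx
      omega
    · exact absurd rfl hne

def AdjAdj (e f : Edge V E) : Prop := ∃ g, Adj V E e g ∧ Adj V E g f

def EvenR : Edge V E → Edge V E → Prop := Relation.ReflTransGen (AdjAdj V E)

def OddR (e f : Edge V E) : Prop := ∃ g, EvenR V E e g ∧ Adj V E g f

lemma evenR_symm {e f : Edge V E} (h : EvenR V E e f) : EvenR V E f e :=
  by
    haveI : Std.Symm (AdjAdj V E) :=
      ⟨fun _ _ ⟨g, h1, h2⟩ => ⟨g, adj_symm V E h2, adj_symm V E h1⟩⟩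
    exact (Relation.ReflTransGen.stdSymm (r := AdjAdj V E)).symm _ _ h

lemma evenR_refl (e : Edge V E) : EvenR V E e e := Relation.ReflTransGen.refl

lemma evenR_trans {e f g : Edge V E} (h1 : EvenR V E e f) (h2 : EvenR V E f g) :
    EvenR V E e g := Relation.ReflTransGen.trans h1 h2

lemma even_adj_odd {e f g : Edge V E} (h : EvenR V E e f) (hadj : Adj V E f g) :
    OddR V E e g := ⟨f, h, hadj⟩

lemma odd_adj_even {e f g : Edge V E} (h : OddR V E e f) (hadj : Adj V E f g) :
    EvenR V E e g := by
  obtain ⟨m, hem, hmf⟩ := h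
  exact evenR_trans V E hem (Relation.ReflTransGen.single ⟨f, hmf, hadj⟩)

lemma adj_even_odd {a b c : Edge V E} (hadj : Adj V E a b) (h : EvenR V E b c) :
    OddR V E a c := by
  induction h with
  | refl => exact ⟨a, Relation.ReflTransGen.refl, hadj⟩
  | tail _ hstep ih =>
      obtain ⟨m, hcm, hmd⟩ := hstep
      exact even_adj_odd V E (odd_adj_even V E ih hcm) hmd

lemma odd_symm {e f : Edge V E} (h : OddR V E e f) : OddR V E f e := by
  obtain ⟨m, hem, hmf⟩ := h
  exact adj_even_odd V E (adj_symm V E hmf) (evenR_symm V E hem)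

lemma even_odd_trans {e f g : Edge V E} (h1 : EvenR V E e f) (h2 : OddR V E f g) :
    OddR V E e g := by
  obtain ⟨m, hfm, hmg⟩ := h2
  exact ⟨m, evenR_trans V E h1 hfm, hmg⟩

-- alternation of count differences along walks

lemma delta_adj (hreg : ∀ v : V, (E.filter (fun e => v ∈ e)).card = 2)
    {C D : Multiset (Edge V E)} (hbal : Balanced V E C D) {e f : Edge V E}
    (hadj : Adj V E e f) :
    (C.count f : ℤ) - D.count f = -((C.count e : ℤ) - D.count e) := by
  have := balanced_count_adj V E hreg hbal hadj
  omega

lemma delta_even (hreg : ∀ v : V, (E.filter (fun e => v ∈ e)).card = 2)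
    {C D : Multiset (Edge V E)} (hbal : Balanced V E C D) {e f : Edge V E}
    (h : EvenR V E e f) :
    (C.count f : ℤ) - D.count f = (C.count e : ℤ) - D.count e := by
  induction h with
  | refl => rfl
  | tail _ hstep ih =>
      obtain ⟨m, hcm, hmd⟩ := hstep
      rw [delta_adj V E hreg hbal hmd, delta_adj V E hreg hbal hcm, neg_neg, ih]

lemma delta_odd (hreg : ∀ v : V, (E.filter (fun e => v ∈ e)).card = 2)
    {C D : Multiset (Edge V E)} (hbal : Balanced V E C D) {e f : Edge V E}
    (h : OddR V E e f) :
    (C.count f : ℤ) - D.count f = -((C.count e : ℤ) - D.count e) := by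
  obtain ⟨m, hem, hmf⟩ := h
  rw [delta_adj V E hreg hbal hmf, delta_even V E hreg hbal hem]

-- the indicator multisets of the even/odd reachable sets

open Classical in
noncomputable def mP (e₀ : Edge V E) : Multiset (Edge V E) :=
  Finset.univ.val.filter (fun f => EvenR V E e₀ f)

open Classical in
noncomputable def mQ (e₀ : Edge V E) : Multiset (Edge V E) :=
  Finset.univ.val.filter (fun f => OddR V E e₀ f)

open Classical in
lemma count_mP (e₀ f : Edge V E) :
    (mP V E e₀).count f = if EvenR V E e₀ f then 1 else 0 := by
  rw [mP, Multiset.count_filter]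
  split
  · rw [Multiset.count_univ]
  · rfl

open Classical in
lemma count_mQ (e₀ f : Edge V E) :
    (mQ V E e₀).count f = if OddR V E e₀ f then 1 else 0 := by
  rw [mQ, Multiset.count_filter]
  split
  · rw [Multiset.count_univ]
  · rfl

lemma balanced_mPQ (hreg : ∀ v : V, (E.filter (fun e => v ∈ e)).card = 2) (e₀ : Edge V E) :
    Balanced V E (mP V E e₀) (mQ V E e₀) := by
  intro x
  obtain ⟨e, f, hef, hxe, hxf, huniq⟩ := two_edges V E hreg x
  have hadj : Adj V E e f := ⟨hef, x, hxe, hxf⟩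
  rw [degIn_eq_counts V E hef huniq hxe hxf, degIn_eq_counts V E hef huniq hxe hxf,
    count_mP, count_mP, count_mQ, count_mQ]
  have h1 : EvenR V E e₀ e ↔ OddR V E e₀ f :=
    ⟨fun h => even_adj_odd V E h hadj, fun h => odd_adj_even V E h (adj_symm V E hadj)⟩
  have h2 : EvenR V E e₀ f ↔ OddR V E e₀ e :=
    ⟨fun h => even_adj_odd V E h (adj_symm V E hadj), fun h => odd_adj_even V E h hadj⟩
  by_cases hc1 : EvenR V E e₀ e <;> by_cases hc2 : EvenR V E e₀ f <;>
    simp [hc1, hc2, ← h1, ← h2]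

lemma exists_adj (hE : ∀ e ∈ E, e.Nonempty)
    (hreg : ∀ v : V, (E.filter (fun e => v ∈ e)).card = 2) (e₀ : Edge V E) :
    ∃ f, Adj V E e₀ f := by
  obtain ⟨x, hx⟩ := hE e₀.1 e₀.2
  obtain ⟨e, f, hef, hxe, hxf, huniq⟩ := two_edges V E hreg x
  rcases huniq e₀ hx with rfl | rfl
  · exact ⟨f, hef, x, hxe, hxf⟩
  · exact ⟨e, hef.symm, x, hxf, hxe⟩

-- ## structure of primitive balanced pairs

lemma balanced_le_eq (hE : ∀ e ∈ E, e.Nonempty) {B R : Multiset (Edge V E)}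
    (hbal : Balanced V E B R) (hle : B ≤ R) : B = R := by
  have h1 : Balanced V E (B - B) (R - B) :=
    balanced_sub V E hbal (fun v => rfl) le_rfl hle
  rw [tsub_self] at h1
  have h2 : R - B = 0 := balanced_zero_left V E hE h1
  exact le_antisymm hle (tsub_eq_zero_iff_le.1 h2)

lemma primitive_disjoint (hE : ∀ e ∈ E, e.Nonempty) {B R : Multiset (Edge V E)}
    (hprim : Primitive V E B R) (hBR : B ≠ R) : B ∩ R = 0 := by
  by_contra hS
  set S := B ∩ R with hSdef
  have hSB : S ≤ B := Multiset.inter_le_left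
  have hSR : S ≤ R := Multiset.inter_le_right
  have hSbal : Balanced V E S S := fun v => rfl
  have hltB : S < B := by
    rcases lt_or_eq_of_le hSB with h | h
    · exact h
    · exfalso
      have hBR' : B ≤ R := h ▸ hSR
      exact hBR (balanced_le_eq V E hE hprim.1 hBR')
  have hltR : S < R := by
    rcases lt_or_eq_of_le hSR with h | h
    · exact h
    · exfalso
      have hRB' : R ≤ B := h ▸ hSB
      exact hBR (balanced_le_eq V E hE (balanced_symm V E hprim.1) hRB').symm
  exact hprim.2 ⟨S, S, fun hh => hS hh.1, hSbal, hltB, hltR⟩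

lemma disjoint_counts {B R : Multiset (Edge V E)} (h : B ∩ R = 0) (g : Edge V E) :
    B.count g = 0 ∨ R.count g = 0 := by
  have := congrArg (Multiset.count g) h
  rw [Multiset.count_inter, Multiset.count_zero] at this
  omega

lemma primitive_struct (hE : ∀ e ∈ E, e.Nonempty)
    (hreg : ∀ v : V, (E.filter (fun e => v ∈ e)).card = 2)
    {B R : Multiset (Edge V E)} (hprim : Primitive V E B R) (hBR : B ≠ R)
    {e₀ : Edge V E} (he₀ : e₀ ∈ B) :
    B = mP V E e₀ ∧ R = mQ V E e₀ := by
  have hbal := hprim.1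
  have hdisj := primitive_disjoint V E hE hprim hBR
  have hcounts := disjoint_counts V E hdisj
  have he₀pos : 0 < B.count e₀ := Multiset.count_pos.2 he₀
  have he₀R : R.count e₀ = 0 := by rcases hcounts e₀ with h | h; omega; exact h
  have hEvenVal : ∀ f, EvenR V E e₀ f → B.count f = B.count e₀ ∧ R.count f = 0 := by
    intro f hf
    have h := delta_even V E hreg hbal hf
    rw [he₀R] at h
    rcases hcounts f with h1 | h1 <;> omega
  have hOddVal : ∀ f, OddR V E e₀ f → R.count f = B.count e₀ ∧ B.count f = 0 := by
    intro f hf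
    have h := delta_odd V E hreg hbal hf
    rw [he₀R] at h
    rcases hcounts f with h1 | h1 <;> omega
  have hPle : mP V E e₀ ≤ B := by
    rw [Multiset.le_iff_count]
    intro f
    rw [count_mP]
    split
    · rename_i h
      have := (hEvenVal f h).1
      omega
    · omega
  have hQle : mQ V E e₀ ≤ R := by
    rw [Multiset.le_iff_count]
    intro f
    rw [count_mQ]
    split
    · rename_i h
      have := (hOddVal f h).1
      omega
    · omega
  have hbalPQ := balanced_mPQ V E hreg e₀
  have hP0 : mP V E e₀ ≠ 0 := by
    intro h
    have := congrArg (Multiset.count e₀) h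
    rw [count_mP, if_pos (evenR_refl V E _), Multiset.count_zero] at this
    omega
  have hQ0 : mQ V E e₀ ≠ 0 := by
    obtain ⟨f, hadj⟩ := exists_adj V E hE hreg e₀
    intro h
    have := congrArg (Multiset.count f) h
    rw [count_mQ, if_pos (show OddR V E e₀ f from ⟨e₀, evenR_refl V E e₀, hadj⟩), Multiset.count_zero] at this
    omega
  have hPB : mP V E e₀ = B := by
    rcases lt_or_eq_of_le hPle with hlt | h
    · exfalso
      rcases lt_or_eq_of_le hQle with hltQ | hQR
      · exact hprim.2 ⟨mP V E e₀, mQ V E e₀, fun hh => hP0 hh.1, hbalPQ, hlt, hltQ⟩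
      · have hsub : Balanced V E (B - mP V E e₀) (R - mQ V E e₀) :=
          balanced_sub V E hbal hbalPQ hPle hQle
        rw [← hQR, tsub_self] at hsub
        have := balanced_zero_left V E hE (balanced_symm V E hsub)
        rw [tsub_eq_zero_iff_le] at this
        exact absurd (le_antisymm hPle this) (ne_of_lt hlt)
    · exact h
  have hsub : Balanced V E (B - mP V E e₀) (R - mQ V E e₀) :=
    balanced_sub V E hbal hbalPQ hPle hQle
  rw [hPB, tsub_self] at hsub
  have := balanced_zero_left V E hE hsub
  rw [tsub_eq_zero_iff_le] at this
  exact ⟨hPB.symm, (le_antisymm this hQle).symm.symm⟩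

lemma fiber_rigid (hE : ∀ e ∈ E, e.Nonempty)
    (hreg : ∀ v : V, (E.filter (fun e => v ∈ e)).card = 2)
    {B R : Multiset (Edge V E)} (hprim : Primitive V E B R) (hBR : B ≠ R)
    {C D : Multiset (Edge V E)} (hbal : Balanced V E C D) (hdisj : C ∩ D = 0)
    (hC0 : C ≠ 0) (hle : C ≤ B) :
    C = B ∧ D = R := by
  classical
  obtain ⟨e₁, he₁⟩ := Multiset.exists_mem_of_ne_zero hC0
  have he₁B : e₁ ∈ B := Multiset.mem_of_le hle he₁
  obtain ⟨hB, hR⟩ := primitive_struct V E hE hreg hprim hBR he₁B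
  have hcountB : ∀ f, B.count f = if EvenR V E e₁ f then 1 else 0 := by
    intro f; rw [hB, count_mP]
  have hcountR : ∀ f, R.count f = if OddR V E e₁ f then 1 else 0 := by
    intro f; rw [hR, count_mQ]
  have hcounts := disjoint_counts V E hdisj
  have hCle : ∀ f, C.count f ≤ B.count f := Multiset.le_iff_count.1 hle
  have he₁C : C.count e₁ = 1 := by
    have h1 := Multiset.count_pos.2 he₁
    have h2 := hCle e₁
    rw [hcountB e₁, if_pos (evenR_refl V E _)] at h2
    omega
  have he₁D : D.count e₁ = 0 := by rcases hcounts e₁ with h | h; omega; exact h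
  have hEvenVal : ∀ f, EvenR V E e₁ f → C.count f = 1 ∧ D.count f = 0 := by
    intro f hf
    have h := delta_even V E hreg hbal hf
    rw [he₁C, he₁D] at h
    rcases hcounts f with h1 | h1 <;> omega
  have hOddVal : ∀ f, OddR V E e₁ f → D.count f = 1 ∧ C.count f = 0 := by
    intro f hf
    have h := delta_odd V E hreg hbal hf
    rw [he₁C, he₁D] at h
    rcases hcounts f with h1 | h1 <;> omega
  have hCB : C = B := by
    apply le_antisymm hle
    rw [Multiset.le_iff_count]
    intro f
    rw [hcountB f]
    split
    · rename_i h; exact le_of_eq (hEvenVal f h).1.symm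
    · omega
  have hRle : R ≤ D := by
    rw [Multiset.le_iff_count]
    intro f
    rw [hcountR f]
    split
    · rename_i h; exact le_of_eq (hOddVal f h).1.symm
    · omega
  have hsub : Balanced V E (C - B) (D - R) :=
    balanced_sub V E hbal hprim.1 hCB.ge hRle
  have hCB0 : C - B = 0 := by rw [hCB, tsub_self]
  rw [hCB0] at hsub
  have hDR : D - R = 0 := balanced_zero_left V E hE hsub
  exact ⟨hCB, le_antisymm (tsub_eq_zero_iff_le.1 hDR) hRle⟩

lemma balanced_le_rigid (hE : ∀ e ∈ E, e.Nonempty)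
    (hreg : ∀ v : V, (E.filter (fun e => v ∈ e)).card = 2)
    {B R : Multiset (Edge V E)} (hprim : Primitive V E B R) (hBR : B ≠ R)
    {Bu Bv : Multiset (Edge V E)} (hbal : Balanced V E Bu Bv) (hle : Bu ≤ B)
    (hne : Bu ≠ Bv) : Bu = B ∧ Bv = R := by
  classical
  set W := Bu ∩ Bv with hW
  have hWu : W ≤ Bu := Multiset.inter_le_left
  have hWv : W ≤ Bv := Multiset.inter_le_right
  have hCD : Balanced V E (Bu - W) (Bv - W) :=
    balanced_sub V E hbal (fun v => rfl) hWu hWv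
  have hdisj : (Bu - W) ∩ (Bv - W) = 0 := by
    rw [Multiset.ext]
    intro g
    rw [Multiset.count_inter, Multiset.count_sub, Multiset.count_sub, hW,
      Multiset.count_inter, Multiset.count_zero]
    omega
  have hC0 : Bu - W ≠ 0 := by
    intro h0
    have hD0 : Bv - W = 0 := balanced_zero_left V E hE (h0 ▸ hCD)
    apply hne
    have h1 : Bu ≤ W := tsub_eq_zero_iff_le.1 h0
    have h2 : Bv ≤ W := tsub_eq_zero_iff_le.1 hD0
    exact le_antisymm (h1.trans hWv) (h2.trans hWu)
  have hCle : Bu - W ≤ B := tsub_le_self.trans hle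
  obtain ⟨hCB, hDR⟩ := fiber_rigid V E hE hreg hprim hBR hCD hdisj hC0 hCle
  have hBuB : Bu = B := by
    rw [Multiset.ext]
    intro g
    have h1 := congrArg (Multiset.count g) hCB
    rw [Multiset.count_sub] at h1
    have h2 : Multiset.count g W ≤ Multiset.count g Bu := Multiset.le_iff_count.1 hWu g
    have h3 : Multiset.count g Bu ≤ Multiset.count g B := Multiset.le_iff_count.1 hle g
    omega
  have hW0 : W = 0 := by
    rw [Multiset.ext]
    intro g
    rw [Multiset.count_zero]
    have h1 := congrArg (Multiset.count g) hCB
    rw [Multiset.count_sub] at h1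
    have h2 := Multiset.le_iff_count.1 hWu g
    have h3 := congrArg (Multiset.count g) hBuB
    omega
  refine ⟨hBuB, ?_⟩
  rw [← hDR, hW0, tsub_zero]

-- ## indispensability

lemma graver_indispensable (hE : ∀ e ∈ E, e.Nonempty)
    (hreg : ∀ v : V, (E.filter (fun e => v ∈ e)).card = 2)
    {f : MvPolynomial (Edge V E) K} (hf : f ∈ GraverSet K V E) :
    Indispensable K V E f := by
  classical
  obtain ⟨B, R, hprim, hBR, rfl⟩ := hf
  intro G hGbin hGspan
  have hfeq : binom K V E B R
      = monomial B.toFinsupp (1:K) - monomial R.toFinsupp 1 := by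
    rw [binom_eq]; rfl
  have hβρ : B.toFinsupp ≠ R.toFinsupp := by
    intro h
    apply hBR
    have := congrArg Finsupp.toMultiset h
    rwa [Multiset.toFinsupp_toMultiset, Multiset.toFinsupp_toMultiset] at this
  have hmem : monomial B.toFinsupp (1:K) - monomial R.toFinsupp 1 ∈ Ideal.span G := by
    rw [hGspan, ← hfeq]
    exact binom_mem K V E B R hprim.1
  have hconn := conn_of_mem_span K V E G hGbin _ _ hβρ hmem
  rcases Relation.ReflTransGen.cases_head hconn with heq | ⟨c, hstep, -⟩
  · exact absurd heq hβρ
  obtain ⟨a, u, v, hx, hy, hor⟩ := hstep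
  have hg_toric : (monomial u (1:K) - monomial v 1) ∈ toricIdeal K V E := by
    rcases hor with hg | hg
    · rw [← hGspan]; exact Ideal.subset_span hg
    · have h1 : (monomial v (1:K) - monomial u 1) ∈ toricIdeal K V E := by
        rw [← hGspan]; exact Ideal.subset_span hg
      have h2 := neg_mem h1
      rwa [neg_sub] at h2
  have hbal_uv : Balanced V E u.toMultiset v.toMultiset := by
    refine balanced_of_mem K V E _ _ ?_
    rw [mon_toMultiset, mon_toMultiset]
    exact hg_toric
  have huv : u ≠ v := by
    rintro rfl
    have hz : ∀ g ∈ G, g ≠ (0 : MvPolynomial (Edge V E) K) := by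
      intro g hg hg0
      obtain ⟨u', v', hne', hgeq'⟩ := hGbin _ hg
      rw [hg0, eq_comm, sub_eq_zero, monomial_eq_monomial_iff] at hgeq'
      rcases hgeq' with ⟨h, -⟩ | ⟨h, -⟩
      · exact hne' h
      · exact one_ne_zero h
    rcases hor with hg | hg
    · exact hz _ hg (sub_self _)
    · exact hz _ hg (sub_self _)
  have hne_mult : u.toMultiset ≠ v.toMultiset := by
    intro h
    apply huv
    have := congrArg Multiset.toFinsupp h
    rwa [Finsupp.toMultiset_toFinsupp, Finsupp.toMultiset_toFinsupp] at this
  have hle_mult : u.toMultiset ≤ B := by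
    rw [Multiset.le_iff_count]
    intro g
    rw [Finsupp.count_toMultiset]
    have hle' : u ≤ B.toFinsupp := by rw [hx]; exact le_add_self
    have h2 := Finsupp.le_def.1 hle' g
    rwa [Multiset.toFinsupp_apply] at h2
  obtain ⟨huB, hvR⟩ := balanced_le_rigid V E hE hreg hprim hBR hbal_uv hle_mult hne_mult
  have hu : u = B.toFinsupp := by
    have := congrArg Multiset.toFinsupp huB
    rwa [Finsupp.toMultiset_toFinsupp] at this
  have hv : v = R.toFinsupp := by
    have := congrArg Multiset.toFinsupp hvR
    rwa [Finsupp.toMultiset_toFinsupp] at this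
  rcases hor with hg | hg
  · left; rw [hfeq, ← hu, ← hv]; exact hg
  · right; rw [hfeq, neg_sub, ← hu, ← hv]; exact hg

/-- For a `2`-regular `k`-uniform hypergraph `H`, the Graver basis generates
`I_H` and each of its elements is indispensable; hence it is the unique minimal binomial
generating set of `I_H`. -/
theorem graver_unique_minimal_of_two_regular
    (K : Type) [Field K] (V : Type) [Fintype V] [DecidableEq V]
    (k : ℕ) (E : Finset (Finset V)) (hE : ∀ e ∈ E, e.Nonempty)
    (hunif : ∀ e ∈ E, e.card = k)
    (hreg : ∀ v : V, (E.filter (fun e => v ∈ e)).card = 2) :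
    Ideal.span (GraverSet K V E) = toricIdeal K V E ∧
      ∀ f ∈ GraverSet K V E, Indispensable K V E f := by
  exact ⟨span_graver_eq K V E hE, fun f hf => graver_indispensable K V E hE hreg hf⟩

end ToricHG
end

section
/- Fix a field k and integers r, c ≥ 2. The toric ideal I(2,r,c) of the no-3-way-interaction model on 2×r×c contingency tables contains a primitive binomial of total degree 2·min(r,c), namely the binomial arising from a cycle of length 2·min(r,c) in the complete bipartite graph K_{r,c} (a primitive binomial of a toric ideal is a binomial u − v in the ideal such that there is no other nonzero binomial u' − v' in the ideal with u' dividing u and v' dividing v). -/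
open MvPolynomial

namespace No3Way

variable (K : Type) [Field K]

/-- The monomial map `t_{ijk} ↦ u_{ij} v_{ik} w_{jk}` of the no-`3`-way-interaction model on
`a × r × c` contingency tables. -/
noncomputable def phi3 (a r c : ℕ) :
    MvPolynomial (Fin a × Fin r × Fin c) K →ₐ[K]
      MvPolynomial ((Fin a × Fin r) ⊕ (Fin a × Fin c) ⊕ (Fin r × Fin c)) K :=
  aeval (fun p : Fin a × Fin r × Fin c =>
    X (Sum.inl (p.1, p.2.1)) * X (Sum.inr (Sum.inl (p.1, p.2.2))) *
      X (Sum.inr (Sum.inr (p.2.1, p.2.2))))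

/-- The toric ideal `I(a,r,c)` of the no-`3`-way-interaction model on `a × r × c` tables. -/
noncomputable def I3 (a r c : ℕ) : Ideal (MvPolynomial (Fin a × Fin r × Fin c) K) :=
  RingHom.ker (phi3 K a r c).toRingHom

/-- A binomial: the difference of two distinct monic monomials. -/
def IsBinomial {σ : Type} (f : MvPolynomial σ K) : Prop :=
  ∃ a b : σ →₀ ℕ, a ≠ b ∧ f = monomial a 1 - monomial b 1

end No3Way

namespace No3Way

/-- A primitive binomial of the ideal `I`: a binomial `u - v ∈ I` such that no other nonzero
binomial `u' - v' ∈ I` satisfies `u' ∣ u` and `v' ∣ v`. -/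
def PrimitiveBinomial {σ : Type} (K : Type) [Field K]
    (I : Ideal (MvPolynomial σ K)) (f : MvPolynomial σ K) : Prop :=
  ∃ a b : σ →₀ ℕ, a ≠ b ∧ f = MvPolynomial.monomial a 1 - MvPolynomial.monomial b 1 ∧
    ∀ a' b' : σ →₀ ℕ, a' ≠ b' →
      (MvPolynomial.monomial a' 1 - MvPolynomial.monomial b' 1 : MvPolynomial σ K) ∈ I →
      a' ≤ a → b' ≤ b → a' = a ∧ b' = b

section Aux

variable {a r c : ℕ}

/-- The image in the marginal lattice of a unit vector at `p`. -/
noncomputable def gmarg (p : Fin a × Fin r × Fin c) :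
    ((Fin a × Fin r) ⊕ (Fin a × Fin c) ⊕ (Fin r × Fin c)) →₀ ℕ :=
  Finsupp.single (Sum.inl (p.1, p.2.1)) 1 + Finsupp.single (Sum.inr (Sum.inl (p.1, p.2.2))) 1 +
    Finsupp.single (Sum.inr (Sum.inr (p.2.1, p.2.2))) 1

/-- The marginal map on exponent vectors. -/
noncomputable def margMap : ((Fin a × Fin r × Fin c) →₀ ℕ) →+
    (((Fin a × Fin r) ⊕ (Fin a × Fin c) ⊕ (Fin r × Fin c)) →₀ ℕ) :=
  Finsupp.liftAddHom fun p => (smulAddHom ℕ _).flip (gmarg p)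

lemma margMap_single (p : Fin a × Fin r × Fin c) (e : ℕ) :
    margMap (Finsupp.single p e) = e • gmarg p :=
  Finsupp.liftAddHom_apply_single _ _ _

variable (K : Type) [Field K]

lemma phi3_monomial (d : (Fin a × Fin r × Fin c) →₀ ℕ) :
    phi3 K a r c (monomial d 1) = monomial (margMap d) 1 := by
  induction d using Finsupp.induction with
  | zero => simp [margMap]
  | single_add p e f hp he ih =>
    have h1 : monomial (Finsupp.single p e + f) (1 : K) =
        monomial (Finsupp.single p e) 1 * monomial f 1 := by
      rw [monomial_mul, one_mul]
    rw [h1, map_mul, ih, ← X_pow_eq_monomial, map_pow, phi3, aeval_X]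
    have h2 : (X (Sum.inl (p.1, p.2.1)) * X (Sum.inr (Sum.inl (p.1, p.2.2))) *
        X (Sum.inr (Sum.inr (p.2.1, p.2.2))) :
        MvPolynomial ((Fin a × Fin r) ⊕ (Fin a × Fin c) ⊕ (Fin r × Fin c)) K)
        = monomial (gmarg p) 1 := by
      simp [X, monomial_mul, gmarg]
    rw [h2, monomial_pow, one_pow, monomial_mul, one_mul, map_add, margMap_single]

/-- Membership of a binomial in the toric ideal is equality of marginals. -/
lemma binomial_mem_I3_iff (u v : (Fin a × Fin r × Fin c) →₀ ℕ) :
    (monomial u 1 - monomial v 1 : MvPolynomial (Fin a × Fin r × Fin c) K) ∈ I3 K a r c ↔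
      margMap u = margMap v := by
  rw [I3, RingHom.mem_ker]
  constructor
  · intro h
    have h2 : phi3 K a r c (monomial u 1 - monomial v 1) = 0 := h
    rw [map_sub, sub_eq_zero, phi3_monomial, phi3_monomial] at h2
    exact monomial_left_injective (one_ne_zero (α := K)) h2
  · intro h
    show phi3 K a r c (monomial u 1 - monomial v 1) = 0
    rw [map_sub, sub_eq_zero, phi3_monomial, phi3_monomial, h]

lemma sum_eq_sum_of_inj {α γ : Type} [Fintype α] [Fintype γ] [DecidableEq α] (F : α → ℕ)
    (f : γ → α) (hf : Function.Injective f) (h0 : ∀ x, (∀ t, f t ≠ x) → F x = 0) :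
    ∑ x, F x = ∑ t, F (f t) := by
  rw [← Finset.sum_image (g := f) (f := F) (by intro x _ y _ h; exact hf h)]
  refine (Finset.sum_subset (Finset.subset_univ _) fun x _ hx => ?_).symm
  refine h0 x fun t ht => hx ?_
  exact Finset.mem_image.mpr ⟨t, Finset.mem_univ t, ht⟩

lemma margMap_apply (d : (Fin a × Fin r × Fin c) →₀ ℕ)
    (q : (Fin a × Fin r) ⊕ (Fin a × Fin c) ⊕ (Fin r × Fin c)) :
    margMap d q = ∑ p : Fin a × Fin r × Fin c, d p * gmarg p q := by
  rw [margMap, Finsupp.liftAddHom_apply, Finsupp.sum_apply, Finsupp.sum]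
  simp only [smulAddHom_apply, AddMonoidHom.flip_apply, Finsupp.smul_apply, smul_eq_mul]
  exact Finset.sum_subset (Finset.subset_univ _) (by
    intro x _ hx
    simp [Finsupp.notMem_support_iff.mp hx])

lemma margMap_row (d : (Fin a × Fin r × Fin c) →₀ ℕ) (i : Fin a) (j : Fin r) :
    margMap d (Sum.inl (i, j)) = ∑ k : Fin c, d (i, j, k) := by
  rw [margMap_apply,
    sum_eq_sum_of_inj _ (fun k : Fin c => ((i, j, k) : Fin a × Fin r × Fin c))
      (fun x y h => by simpa [Prod.ext_iff] using h)
      (by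
        rintro ⟨x1, x2, x3⟩ hx
        have := hx x3
        have hcond : ¬(x1 = i ∧ x2 = j) := by
          rintro ⟨rfl, rfl⟩; exact this rfl
        have : gmarg (x1, x2, x3) (Sum.inl (i, j)) = 0 := by
          simp only [gmarg, Finsupp.add_apply, Finsupp.single_apply]
          rw [if_neg, if_neg, if_neg] <;> simp [Prod.ext_iff] <;> tauto
        simp [this])]
  refine Finset.sum_congr rfl fun k _ => ?_
  have : gmarg ((i, j, k) : Fin a × Fin r × Fin c) (Sum.inl (i, j)) = 1 := by
    simp [gmarg, Finsupp.single_apply]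
  rw [this, mul_one]

lemma margMap_col (d : (Fin a × Fin r × Fin c) →₀ ℕ) (i : Fin a) (k : Fin c) :
    margMap d (Sum.inr (Sum.inl (i, k))) = ∑ j : Fin r, d (i, j, k) := by
  rw [margMap_apply,
    sum_eq_sum_of_inj _ (fun j : Fin r => ((i, j, k) : Fin a × Fin r × Fin c))
      (fun x y h => by simpa [Prod.ext_iff] using h)
      (by
        rintro ⟨x1, x2, x3⟩ hx
        have := hx x2
        have hcond : ¬(x1 = i ∧ x3 = k) := by
          rintro ⟨rfl, rfl⟩; exact this rfl
        have : gmarg (x1, x2, x3) (Sum.inr (Sum.inl (i, k))) = 0 := by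
          simp only [gmarg, Finsupp.add_apply, Finsupp.single_apply]
          rw [if_neg, if_neg, if_neg] <;> simp [Prod.ext_iff] <;> tauto
        simp [this])]
  refine Finset.sum_congr rfl fun j _ => ?_
  have : gmarg ((i, j, k) : Fin a × Fin r × Fin c) (Sum.inr (Sum.inl (i, k))) = 1 := by
    simp [gmarg, Finsupp.single_apply]
  rw [this, mul_one]

lemma margMap_tube (d : (Fin a × Fin r × Fin c) →₀ ℕ) (j : Fin r) (k : Fin c) :
    margMap d (Sum.inr (Sum.inr (j, k))) = ∑ i : Fin a, d (i, j, k) := by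
  rw [margMap_apply,
    sum_eq_sum_of_inj _ (fun i : Fin a => ((i, j, k) : Fin a × Fin r × Fin c))
      (fun x y h => by simpa [Prod.ext_iff] using h)
      (by
        rintro ⟨x1, x2, x3⟩ hx
        have := hx x1
        have hcond : ¬(x2 = j ∧ x3 = k) := by
          rintro ⟨rfl, rfl⟩; exact this rfl
        have : gmarg (x1, x2, x3) (Sum.inr (Sum.inr (j, k))) = 0 := by
          simp only [gmarg, Finsupp.add_apply, Finsupp.single_apply]
          rw [if_neg, if_neg, if_neg] <;> simp [Prod.ext_iff] <;> tauto
        simp [this])]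
  refine Finset.sum_congr rfl fun i _ => ?_
  have : gmarg ((i, j, k) : Fin a × Fin r × Fin c) (Sum.inr (Sum.inr (j, k))) = 1 := by
    simp [gmarg, Finsupp.single_apply]
  rw [this, mul_one]

end Aux

section Cycle

variable {m r c : ℕ} [NeZero m]

/-- Points of the first monomial of the cycle binomial. -/
def P0 (hmr : m ≤ r) (hmc : m ≤ c) (s : Fin m) : Fin 2 × Fin r × Fin c :=
  (0, Fin.castLE hmr s, Fin.castLE hmc s)

def P1 (hmr : m ≤ r) (hmc : m ≤ c) (s : Fin m) : Fin 2 × Fin r × Fin c :=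
  (1, Fin.castLE hmr s, Fin.castLE hmc (s + 1))

def Q0 (hmr : m ≤ r) (hmc : m ≤ c) (s : Fin m) : Fin 2 × Fin r × Fin c :=
  (1, Fin.castLE hmr s, Fin.castLE hmc s)

def Q1 (hmr : m ≤ r) (hmc : m ≤ c) (s : Fin m) : Fin 2 × Fin r × Fin c :=
  (0, Fin.castLE hmr s, Fin.castLE hmc (s + 1))

/-- The exponent vector of the first monomial of the cycle binomial. -/
noncomputable def Acyc (hmr : m ≤ r) (hmc : m ≤ c) : (Fin 2 × Fin r × Fin c) →₀ ℕ :=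
  ∑ s : Fin m, (Finsupp.single (P0 hmr hmc s) 1 + Finsupp.single (P1 hmr hmc s) 1)

noncomputable def Bcyc (hmr : m ≤ r) (hmc : m ≤ c) : (Fin 2 × Fin r × Fin c) →₀ ℕ :=
  ∑ s : Fin m, (Finsupp.single (Q0 hmr hmc s) 1 + Finsupp.single (Q1 hmr hmc s) 1)

lemma succ_ne (hm : 2 ≤ m) (s : Fin m) : s + 1 ≠ s := by
  intro h
  have h1 : ((s + 1 : Fin m) : ℕ) = ((s : ℕ) + 1) % m := by
    rw [Fin.add_def]
    congr 1
    simp [Fin.val_one', Nat.mod_eq_of_lt (show 1 < m by omega)]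
  have h2 := congrArg Fin.val h
  rw [h1] at h2
  have hs := s.isLt
  by_cases hlt : (s : ℕ) + 1 < m
  · rw [Nat.mod_eq_of_lt hlt] at h2; omega
  · have hE : (s : ℕ) + 1 = m := by omega
    rw [hE, Nat.mod_self] at h2
    omega

variable (hmr : m ≤ r) (hmc : m ≤ c)

lemma Acyc_apply (x : Fin 2 × Fin r × Fin c) :
    Acyc hmr hmc x = (∑ s : Fin m, if P0 hmr hmc s = x then 1 else 0) +
      (∑ s : Fin m, if P1 hmr hmc s = x then 1 else 0) := by
  rw [Acyc, Finset.sum_apply']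
  simp [Finsupp.add_apply, Finsupp.single_apply, Finset.sum_add_distrib]

lemma Bcyc_apply (x : Fin 2 × Fin r × Fin c) :
    Bcyc hmr hmc x = (∑ s : Fin m, if Q0 hmr hmc s = x then 1 else 0) +
      (∑ s : Fin m, if Q1 hmr hmc s = x then 1 else 0) := by
  rw [Bcyc, Finset.sum_apply']
  simp [Finsupp.add_apply, Finsupp.single_apply, Finset.sum_add_distrib]

lemma Acyc_P0 (s : Fin m) : Acyc hmr hmc (P0 hmr hmc s) = 1 := by
  rw [Acyc_apply]
  have h1 : (∑ t : Fin m, if P0 hmr hmc t = P0 hmr hmc s then 1 else 0) = 1 := by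
    rw [Finset.sum_eq_single_of_mem s (Finset.mem_univ s)]
    · simp
    · intro t _ hts
      rw [if_neg]
      simp only [P0, Prod.ext_iff, Fin.castLE_inj]
      tauto
  have h2 : (∑ t : Fin m, if P1 hmr hmc t = P0 hmr hmc s then 1 else 0) = 0 := by
    refine Finset.sum_eq_zero fun t _ => ?_
    rw [if_neg]
    simp only [P1, P0, Prod.ext_iff]
    intro h
    exact absurd h.1 (by decide)
  omega

lemma Acyc_P1 (s : Fin m) : Acyc hmr hmc (P1 hmr hmc s) = 1 := by
  rw [Acyc_apply]
  have h1 : (∑ t : Fin m, if P0 hmr hmc t = P1 hmr hmc s then 1 else 0) = 0 := by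
    refine Finset.sum_eq_zero fun t _ => ?_
    rw [if_neg]
    simp only [P1, P0, Prod.ext_iff]
    intro h
    exact absurd h.1 (by decide)
  have h2 : (∑ t : Fin m, if P1 hmr hmc t = P1 hmr hmc s then 1 else 0) = 1 := by
    rw [Finset.sum_eq_single_of_mem s (Finset.mem_univ s)]
    · simp
    · intro t _ hts
      rw [if_neg]
      simp only [P1, Prod.ext_iff, Fin.castLE_inj]
      tauto
  omega

lemma Acyc_eq_zero (x : Fin 2 × Fin r × Fin c) (h0 : ∀ t, P0 hmr hmc t ≠ x)
    (h1 : ∀ t, P1 hmr hmc t ≠ x) : Acyc hmr hmc x = 0 := by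
  rw [Acyc_apply]
  rw [Finset.sum_eq_zero fun t _ => if_neg (h0 t), Finset.sum_eq_zero fun t _ => if_neg (h1 t)]
  simp

lemma Bcyc_Q0 (s : Fin m) : Bcyc hmr hmc (Q0 hmr hmc s) = 1 := by
  rw [Bcyc_apply]
  have h1 : (∑ t : Fin m, if Q0 hmr hmc t = Q0 hmr hmc s then 1 else 0) = 1 := by
    rw [Finset.sum_eq_single_of_mem s (Finset.mem_univ s)]
    · simp
    · intro t _ hts
      rw [if_neg]
      simp only [Q0, Prod.ext_iff, Fin.castLE_inj]
      tauto
  have h2 : (∑ t : Fin m, if Q1 hmr hmc t = Q0 hmr hmc s then 1 else 0) = 0 := by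
    refine Finset.sum_eq_zero fun t _ => ?_
    rw [if_neg]
    simp only [Q1, Q0, Prod.ext_iff]
    intro h
    exact absurd h.1 (by decide)
  omega

lemma Bcyc_Q1 (s : Fin m) : Bcyc hmr hmc (Q1 hmr hmc s) = 1 := by
  rw [Bcyc_apply]
  have h1 : (∑ t : Fin m, if Q0 hmr hmc t = Q1 hmr hmc s then 1 else 0) = 0 := by
    refine Finset.sum_eq_zero fun t _ => ?_
    rw [if_neg]
    simp only [Q1, Q0, Prod.ext_iff]
    intro h
    exact absurd h.1 (by decide)
  have h2 : (∑ t : Fin m, if Q1 hmr hmc t = Q1 hmr hmc s then 1 else 0) = 1 := by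
    rw [Finset.sum_eq_single_of_mem s (Finset.mem_univ s)]
    · simp
    · intro t _ hts
      rw [if_neg]
      simp only [Q1, Prod.ext_iff, Fin.castLE_inj]
      tauto
  omega

lemma Bcyc_eq_zero (x : Fin 2 × Fin r × Fin c) (h0 : ∀ t, Q0 hmr hmc t ≠ x)
    (h1 : ∀ t, Q1 hmr hmc t ≠ x) : Bcyc hmr hmc x = 0 := by
  rw [Bcyc_apply]
  rw [Finset.sum_eq_zero fun t _ => if_neg (h0 t), Finset.sum_eq_zero fun t _ => if_neg (h1 t)]
  simp

/-- The marginals of the two cycle monomials agree. -/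
lemma margMap_Acyc_eq_Bcyc : margMap (Acyc hmr hmc) = margMap (Bcyc hmr hmc) := by
  rw [Acyc, Bcyc, map_sum, map_sum]
  simp only [map_add, margMap_single, one_smul]
  have hA : ∀ s : Fin m, gmarg (P0 hmr hmc s) + gmarg (P1 hmr hmc s) =
      ((Finsupp.single (Sum.inl ((0 : Fin 2), Fin.castLE hmr s)) 1 +
        Finsupp.single (Sum.inl ((1 : Fin 2), Fin.castLE hmr s)) 1 +
        Finsupp.single (Sum.inr (Sum.inr (Fin.castLE hmr s, Fin.castLE hmc s))) 1 +
        Finsupp.single (Sum.inr (Sum.inr (Fin.castLE hmr s, Fin.castLE hmc (s + 1)))) 1) +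
       (Finsupp.single (Sum.inr (Sum.inl ((0 : Fin 2), Fin.castLE hmc s))) 1 +
        Finsupp.single (Sum.inr (Sum.inl ((1 : Fin 2), Fin.castLE hmc (s + 1)))) 1)) := by
    intro s
    simp only [gmarg, P0, P1]
    abel
  have hB : ∀ s : Fin m, gmarg (Q0 hmr hmc s) + gmarg (Q1 hmr hmc s) =
      ((Finsupp.single (Sum.inl ((0 : Fin 2), Fin.castLE hmr s)) 1 +
        Finsupp.single (Sum.inl ((1 : Fin 2), Fin.castLE hmr s)) 1 +
        Finsupp.single (Sum.inr (Sum.inr (Fin.castLE hmr s, Fin.castLE hmc s))) 1 +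
        Finsupp.single (Sum.inr (Sum.inr (Fin.castLE hmr s, Fin.castLE hmc (s + 1)))) 1) +
       (Finsupp.single (Sum.inr (Sum.inl ((1 : Fin 2), Fin.castLE hmc s))) 1 +
        Finsupp.single (Sum.inr (Sum.inl ((0 : Fin 2), Fin.castLE hmc (s + 1)))) 1)) := by
    intro s
    simp only [gmarg, Q0, Q1]
    abel
  rw [Finset.sum_congr rfl fun s _ => hA s, Finset.sum_congr rfl fun s _ => hB s]
  simp only [Finset.sum_add_distrib]
  have e1 : (∑ s : Fin m, Finsupp.single
        (Sum.inr (Sum.inl ((1 : Fin 2), Fin.castLE hmc (s + 1))) :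
          (Fin 2 × Fin r) ⊕ (Fin 2 × Fin c) ⊕ (Fin r × Fin c)) (1 : ℕ)) =
      ∑ s : Fin m, Finsupp.single (Sum.inr (Sum.inl ((1 : Fin 2), Fin.castLE hmc s))) 1 :=
    Fintype.sum_equiv (Equiv.addRight (1 : Fin m)) _ _ (fun s => rfl)
  have e2 : (∑ s : Fin m, Finsupp.single
        (Sum.inr (Sum.inl ((0 : Fin 2), Fin.castLE hmc (s + 1))) :
          (Fin 2 × Fin r) ⊕ (Fin 2 × Fin c) ⊕ (Fin r × Fin c)) (1 : ℕ)) =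
      ∑ s : Fin m, Finsupp.single (Sum.inr (Sum.inl ((0 : Fin 2), Fin.castLE hmc s))) 1 :=
    Fintype.sum_equiv (Equiv.addRight (1 : Fin m)) _ _ (fun s => rfl)
  rw [e1, e2]
  abel

open Fin.NatCast in
/-- The key combinatorial step: a binomial dividing the cycle binomial and lying in the toric
ideal must be the cycle binomial itself. -/
lemma primitive_step (hm : 2 ≤ m)
    (a' b' : (Fin 2 × Fin r × Fin c) →₀ ℕ)
    (ha : a' ≤ Acyc hmr hmc) (hb : b' ≤ Bcyc hmr hmc)
    (hM : margMap a' = margMap b') (hne : a' ≠ b') :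
    a' = Acyc hmr hmc ∧ b' = Bcyc hmr hmc := by
  classical
  have hale : ∀ x, a' x ≤ Acyc hmr hmc x := fun x => Finsupp.le_def.mp ha x
  have hble : ∀ x, b' x ≤ Bcyc hmr hmc x := fun x => Finsupp.le_def.mp hb x
  have ha0 : ∀ x, (∀ t, P0 hmr hmc t ≠ x) → (∀ t, P1 hmr hmc t ≠ x) → a' x = 0 := by
    intro x h0 h1
    have := hale x
    rw [Acyc_eq_zero hmr hmc x h0 h1] at this
    omega
  have hb0 : ∀ x, (∀ t, Q0 hmr hmc t ≠ x) → (∀ t, Q1 hmr hmc t ≠ x) → b' x = 0 := by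
    intro x h0 h1
    have := hble x
    rw [Bcyc_eq_zero hmr hmc x h0 h1] at this
    omega
  have hMq : ∀ q, margMap a' q = margMap b' q := fun q => by rw [hM]
  -- row sums
  have rowA0 : ∀ s : Fin m, (∑ k : Fin c, a' ((0 : Fin 2), Fin.castLE hmr s, k))
      = a' (P0 hmr hmc s) := by
    intro s
    rw [Finset.sum_eq_single_of_mem (Fin.castLE hmc s) (Finset.mem_univ _)]
    · rfl
    · intro k _ hk
      refine ha0 _ ?_ ?_
      · intro t hteq
        simp only [P0, Prod.mk.injEq, Fin.castLE_inj] at hteq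
        obtain ⟨-, rfl, h3⟩ := hteq
        exact hk h3.symm
      · intro t hteq
        simp only [P1, Prod.mk.injEq] at hteq
        exact absurd hteq.1 (by decide)
  have rowA1 : ∀ s : Fin m, (∑ k : Fin c, a' ((1 : Fin 2), Fin.castLE hmr s, k))
      = a' (P1 hmr hmc s) := by
    intro s
    rw [Finset.sum_eq_single_of_mem (Fin.castLE hmc (s + 1)) (Finset.mem_univ _)]
    · rfl
    · intro k _ hk
      refine ha0 _ ?_ ?_
      · intro t hteq
        simp only [P0, Prod.mk.injEq] at hteq
        exact absurd hteq.1 (by decide)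
      · intro t hteq
        simp only [P1, Prod.mk.injEq, Fin.castLE_inj] at hteq
        obtain ⟨-, rfl, h3⟩ := hteq
        exact hk h3.symm
  have rowB0 : ∀ s : Fin m, (∑ k : Fin c, b' ((0 : Fin 2), Fin.castLE hmr s, k))
      = b' (Q1 hmr hmc s) := by
    intro s
    rw [Finset.sum_eq_single_of_mem (Fin.castLE hmc (s + 1)) (Finset.mem_univ _)]
    · rfl
    · intro k _ hk
      refine hb0 _ ?_ ?_
      · intro t hteq
        simp only [Q0, Prod.mk.injEq] at hteq
        exact absurd hteq.1 (by decide)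
      · intro t hteq
        simp only [Q1, Prod.mk.injEq, Fin.castLE_inj] at hteq
        obtain ⟨-, rfl, h3⟩ := hteq
        exact hk h3.symm
  have rowB1 : ∀ s : Fin m, (∑ k : Fin c, b' ((1 : Fin 2), Fin.castLE hmr s, k))
      = b' (Q0 hmr hmc s) := by
    intro s
    rw [Finset.sum_eq_single_of_mem (Fin.castLE hmc s) (Finset.mem_univ _)]
    · rfl
    · intro k _ hk
      refine hb0 _ ?_ ?_
      · intro t hteq
        simp only [Q0, Prod.mk.injEq, Fin.castLE_inj] at hteq
        obtain ⟨-, rfl, h3⟩ := hteq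
        exact hk h3.symm
      · intro t hteq
        simp only [Q1, Prod.mk.injEq] at hteq
        exact absurd hteq.1 (by decide)
  -- column sums at column `km u`, first layer
  have colA0 : ∀ u : Fin m, (∑ j : Fin r, a' ((0 : Fin 2), j, Fin.castLE hmc u))
      = a' (P0 hmr hmc u) := by
    intro u
    rw [Finset.sum_eq_single_of_mem (Fin.castLE hmr u) (Finset.mem_univ _)]
    · rfl
    · intro j _ hj
      refine ha0 _ ?_ ?_
      · intro t hteq
        simp only [P0, Prod.mk.injEq, Fin.castLE_inj] at hteq
        obtain ⟨-, h2, rfl⟩ := hteq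
        exact hj h2.symm
      · intro t hteq
        simp only [P1, Prod.mk.injEq] at hteq
        exact absurd hteq.1 (by decide)
  have colB0 : ∀ t : Fin m, (∑ j : Fin r, b' ((0 : Fin 2), j, Fin.castLE hmc (t + 1)))
      = b' (Q1 hmr hmc t) := by
    intro t
    rw [Finset.sum_eq_single_of_mem (Fin.castLE hmr t) (Finset.mem_univ _)]
    · rfl
    · intro j _ hj
      refine hb0 _ ?_ ?_
      · intro u hteq
        simp only [Q0, Prod.mk.injEq] at hteq
        exact absurd hteq.1 (by decide)
      · intro u hteq
        simp only [Q1, Prod.mk.injEq, Fin.castLE_inj] at hteq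
        obtain ⟨-, h2, h3⟩ := hteq
        have : u = t := by
          have := add_right_cancel h3
          exact this
        subst this
        exact hj h2.symm
  -- extra vanishing facts
  have vA1 : ∀ s : Fin m, a' ((1 : Fin 2), Fin.castLE hmr s, Fin.castLE hmc s) = 0 := by
    intro s
    refine ha0 _ ?_ ?_
    · intro t hteq
      simp only [P0, Prod.mk.injEq] at hteq
      exact absurd hteq.1 (by decide)
    · intro t hteq
      simp only [P1, Prod.mk.injEq, Fin.castLE_inj] at hteq
      obtain ⟨-, rfl, h3⟩ := hteq
      exact succ_ne hm t h3
  have vA0 : ∀ s : Fin m, a' ((0 : Fin 2), Fin.castLE hmr s, Fin.castLE hmc (s + 1)) = 0 := by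
    intro s
    refine ha0 _ ?_ ?_
    · intro t hteq
      simp only [P0, Prod.mk.injEq, Fin.castLE_inj] at hteq
      obtain ⟨-, rfl, h3⟩ := hteq
      exact succ_ne hm t h3.symm
    · intro t hteq
      simp only [P1, Prod.mk.injEq] at hteq
      exact absurd hteq.1 (by decide)
  have vB0 : ∀ s : Fin m, b' ((0 : Fin 2), Fin.castLE hmr s, Fin.castLE hmc s) = 0 := by
    intro s
    refine hb0 _ ?_ ?_
    · intro t hteq
      simp only [Q0, Prod.mk.injEq] at hteq
      exact absurd hteq.1 (by decide)
    · intro t hteq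
      simp only [Q1, Prod.mk.injEq, Fin.castLE_inj] at hteq
      obtain ⟨-, rfl, h3⟩ := hteq
      exact succ_ne hm t h3
  have vB1 : ∀ s : Fin m, b' ((1 : Fin 2), Fin.castLE hmr s, Fin.castLE hmc (s + 1)) = 0 := by
    intro s
    refine hb0 _ ?_ ?_
    · intro t hteq
      simp only [Q0, Prod.mk.injEq, Fin.castLE_inj] at hteq
      obtain ⟨-, rfl, h3⟩ := hteq
      exact succ_ne hm t h3.symm
    · intro t hteq
      simp only [Q1, Prod.mk.injEq] at hteq
      exact absurd hteq.1 (by decide)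
  -- the marginal equations
  have E1 : ∀ s : Fin m, a' (P0 hmr hmc s) = b' (Q1 hmr hmc s) := by
    intro s
    have h := hMq (Sum.inl ((0 : Fin 2), Fin.castLE hmr s))
    rw [margMap_row, margMap_row, rowA0 s, rowB0 s] at h
    exact h
  have E2 : ∀ s : Fin m, a' (P1 hmr hmc s) = b' (Q0 hmr hmc s) := by
    intro s
    have h := hMq (Sum.inl ((1 : Fin 2), Fin.castLE hmr s))
    rw [margMap_row, margMap_row, rowA1 s, rowB1 s] at h
    exact h
  have E3 : ∀ s : Fin m, a' (P0 hmr hmc s) = b' (Q0 hmr hmc s) := by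
    intro s
    have h := hMq (Sum.inr (Sum.inr (Fin.castLE hmr s, Fin.castLE hmc s)))
    rw [margMap_tube, margMap_tube, Fin.sum_univ_two, Fin.sum_univ_two, vA1 s, vB0 s] at h
    simpa [P0, Q0] using h
  have E4 : ∀ s : Fin m, a' (P1 hmr hmc s) = b' (Q1 hmr hmc s) := by
    intro s
    have h := hMq (Sum.inr (Sum.inr (Fin.castLE hmr s, Fin.castLE hmc (s + 1))))
    rw [margMap_tube, margMap_tube, Fin.sum_univ_two, Fin.sum_univ_two, vA0 s, vB1 s] at h
    simpa [P1, Q1] using h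
  have E5 : ∀ t : Fin m, a' (P0 hmr hmc (t + 1)) = b' (Q1 hmr hmc t) := by
    intro t
    have h := hMq (Sum.inr (Sum.inl ((0 : Fin 2), Fin.castLE hmc (t + 1))))
    rw [margMap_col, margMap_col, colA0 (t + 1), colB0 t] at h
    exact h
  -- the common value is constant along the cycle
  have step : ∀ t : Fin m, b' (Q1 hmr hmc (t + 1)) = b' (Q1 hmr hmc t) := by
    intro t
    rw [← E1 (t + 1), E5 t]
  have const : ∀ s : Fin m, b' (Q1 hmr hmc s) = b' (Q1 hmr hmc 0) := by
    have hnat : ∀ n : ℕ, b' (Q1 hmr hmc (n : Fin m)) = b' (Q1 hmr hmc 0) := by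
      intro n
      induction n with
      | zero => simp
      | succ n ih => rw [Nat.cast_succ, step, ih]
    intro s
    rw [← Fin.cast_val_eq_self s]
    exact hnat s.val
  have hval : b' (Q1 hmr hmc 0) ≤ 1 := by
    have := hble (Q1 hmr hmc 0)
    rw [Bcyc_Q1] at this
    exact this
  by_cases hv : b' (Q1 hmr hmc 0) = 0
  · -- everything vanishes, contradicting `a' ≠ b'`
    exfalso
    apply hne
    have hz : ∀ s : Fin m, a' (P0 hmr hmc s) = 0 ∧ a' (P1 hmr hmc s) = 0 ∧
        b' (Q0 hmr hmc s) = 0 ∧ b' (Q1 hmr hmc s) = 0 := by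
      intro s
      have h4 : b' (Q1 hmr hmc s) = 0 := by rw [const s, hv]
      refine ⟨?_, ?_, ?_, h4⟩
      · rw [E1 s, h4]
      · rw [E4 s, h4]
      · rw [← E3 s, E1 s, h4]
    have hA' : a' = 0 := by
      ext x
      by_cases h0 : ∃ t, P0 hmr hmc t = x
      · obtain ⟨t, rfl⟩ := h0
        simpa using (hz t).1
      · by_cases h1 : ∃ t, P1 hmr hmc t = x
        · obtain ⟨t, rfl⟩ := h1
          simpa using (hz t).2.1
        · simpa using ha0 x (fun t ht => h0 ⟨t, ht⟩) (fun t ht => h1 ⟨t, ht⟩)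
    have hB' : b' = 0 := by
      ext x
      by_cases h0 : ∃ t, Q0 hmr hmc t = x
      · obtain ⟨t, rfl⟩ := h0
        simpa using (hz t).2.2.1
      · by_cases h1 : ∃ t, Q1 hmr hmc t = x
        · obtain ⟨t, rfl⟩ := h1
          simpa using (hz t).2.2.2
        · simpa using hb0 x (fun t ht => h0 ⟨t, ht⟩) (fun t ht => h1 ⟨t, ht⟩)
    rw [hA', hB']
  · have hv1 : b' (Q1 hmr hmc 0) = 1 := by omega
    have hone : ∀ s : Fin m, a' (P0 hmr hmc s) = 1 ∧ a' (P1 hmr hmc s) = 1 ∧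
        b' (Q0 hmr hmc s) = 1 ∧ b' (Q1 hmr hmc s) = 1 := by
      intro s
      have h4 : b' (Q1 hmr hmc s) = 1 := by rw [const s, hv1]
      refine ⟨?_, ?_, ?_, h4⟩
      · rw [E1 s, h4]
      · rw [E4 s, h4]
      · rw [← E3 s, E1 s, h4]
    constructor
    · ext x
      by_cases h0 : ∃ t, P0 hmr hmc t = x
      · obtain ⟨t, rfl⟩ := h0
        rw [(hone t).1, Acyc_P0]
      · by_cases h1 : ∃ t, P1 hmr hmc t = x
        · obtain ⟨t, rfl⟩ := h1
          rw [(hone t).2.1, Acyc_P1]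
        · rw [ha0 x (fun t ht => h0 ⟨t, ht⟩) (fun t ht => h1 ⟨t, ht⟩),
            Acyc_eq_zero hmr hmc x (fun t ht => h0 ⟨t, ht⟩) (fun t ht => h1 ⟨t, ht⟩)]
    · ext x
      by_cases h0 : ∃ t, Q0 hmr hmc t = x
      · obtain ⟨t, rfl⟩ := h0
        rw [(hone t).2.2.1, Bcyc_Q0]
      · by_cases h1 : ∃ t, Q1 hmr hmc t = x
        · obtain ⟨t, rfl⟩ := h1
          rw [(hone t).2.2.2, Bcyc_Q1]
        · rw [hb0 x (fun t ht => h0 ⟨t, ht⟩) (fun t ht => h1 ⟨t, ht⟩),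
            Bcyc_eq_zero hmr hmc x (fun t ht => h0 ⟨t, ht⟩) (fun t ht => h1 ⟨t, ht⟩)]

lemma Acyc_ne_Bcyc (hm : 2 ≤ m) : Acyc hmr hmc ≠ Bcyc hmr hmc := by
  intro h
  have h1 := congrArg (fun v : (Fin 2 × Fin r × Fin c) →₀ ℕ => v (P0 hmr hmc 0)) h
  rw [Acyc_P0] at h1
  rw [Bcyc_eq_zero hmr hmc (P0 hmr hmc 0) ?_ ?_] at h1
  · exact one_ne_zero h1
  · intro t hteq
    simp only [Q0, P0, Prod.mk.injEq] at hteq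
    exact absurd hteq.1 (by decide)
  · intro t hteq
    have h2 : t = 0 ∧ t + 1 = 0 := by
      simpa [Q1, P0, Prod.ext_iff] using hteq
    obtain ⟨rfl, h3⟩ := h2
    exact succ_ne hm 0 h3

/-- The total degree homomorphism on exponent vectors. -/
noncomputable def degH (σ : Type) : (σ →₀ ℕ) →+ ℕ :=
  Finsupp.liftAddHom fun _ => AddMonoidHom.id ℕ

lemma degH_eq_sum {σ : Type} (d : σ →₀ ℕ) : degH σ d = d.sum fun _ e => e := rfl

lemma degH_single {σ : Type} (p : σ) (e : ℕ) : degH σ (Finsupp.single p e) = e :=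
  Finsupp.liftAddHom_apply_single _ _ _

lemma degH_Acyc : degH _ (Acyc hmr hmc) = 2 * m := by
  rw [Acyc, map_sum]
  simp only [map_add, degH_single]
  simp [Finset.sum_const, mul_comm]

lemma degH_Bcyc : degH _ (Bcyc hmr hmc) = 2 * m := by
  rw [Bcyc, map_sum]
  simp only [map_add, degH_single]
  simp [Finset.sum_const, mul_comm]

end Cycle

/-- For `r, c ≥ 2` the toric ideal `I(2,r,c)` of the no-`3`-way-interaction
model on `2 × r × c` tables contains a primitive binomial of total degree `2 · min r c`
(the binomial arising from a cycle of length `2 · min r c` in `K_{r,c}`). -/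
theorem exists_primitive_binomial_of_degree_two_min
    (K : Type) [Field K] (r c : ℕ) (hr : 2 ≤ r) (hc : 2 ≤ c) :
    ∃ f : MvPolynomial (Fin 2 × Fin r × Fin c) K,
      f ∈ I3 K 2 r c ∧ PrimitiveBinomial K (I3 K 2 r c) f ∧
        f.totalDegree = 2 * min r c := by
  classical
  have hm : 2 ≤ min r c := le_min hr hc
  haveI : NeZero (min r c) := ⟨by omega⟩
  have hmr : min r c ≤ r := min_le_left r c
  have hmc : min r c ≤ c := min_le_right r c
  have hABne := Acyc_ne_Bcyc hmr hmc hm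
  have hmemAB : (monomial (Acyc hmr hmc) 1 - monomial (Bcyc hmr hmc) 1 :
      MvPolynomial (Fin 2 × Fin r × Fin c) K) ∈ I3 K 2 r c :=
    (binomial_mem_I3_iff K _ _).mpr (margMap_Acyc_eq_Bcyc hmr hmc)
  refine ⟨monomial (Acyc hmr hmc) 1 - monomial (Bcyc hmr hmc) 1, hmemAB, ?_, ?_⟩
  · refine ⟨Acyc hmr hmc, Bcyc hmr hmc, hABne, rfl, ?_⟩
    intro a' b' hne hmem ha hb
    exact primitive_step hmr hmc hm a' b' ha hb ((binomial_mem_I3_iff K _ _).mp hmem) hne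
  · have hdA : (monomial (Acyc hmr hmc) (1 : K)).totalDegree = 2 * min r c := by
      rw [totalDegree_monomial _ (one_ne_zero (α := K)), ← degH_eq_sum, degH_Acyc]
    have hdB : (monomial (Bcyc hmr hmc) (1 : K)).totalDegree = 2 * min r c := by
      rw [totalDegree_monomial _ (one_ne_zero (α := K)), ← degH_eq_sum, degH_Bcyc]
    refine le_antisymm ?_ ?_
    · have := totalDegree_sub (monomial (Acyc hmr hmc) (1 : K)) (monomial (Bcyc hmr hmc) 1)
      rw [hdA, hdB, max_self] at this
      exact this
    · have hcoeff : coeff (Acyc hmr hmc) (monomial (Acyc hmr hmc) (1 : K) -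
          monomial (Bcyc hmr hmc) 1) = 1 := by
        simp [coeff_monomial, Ne.symm hABne]
      have hsupp : Acyc hmr hmc ∈ (monomial (Acyc hmr hmc) (1 : K) -
          monomial (Bcyc hmr hmc) 1).support := by
        rw [mem_support_iff, hcoeff]
        exact one_ne_zero
      have := le_totalDegree hsupp
      rwa [← degH_eq_sum, degH_Acyc] at this

end No3Way
end
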